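/- Let $(T,\ell,e,\mu,\eta,\varsigma)$ be an oplax monoidal symmetric monad on a monoidal category $(\mathcal{C},\otimes,I)$, and let $G_1, G_2$ be endofunctors on $\mathcal{C}$. If $\psi_1: TG_1\to G_1T$ and $\psi_2: TG_2\to G_2T$ are symmetric distributive laws, then the composite $\psi_{1,2} = (\psi_1\otimes\psi_2)\circ\ell_{G_1,G_2}: T(G_1\otimes G_2)\to (G_1\otimes G_2)T$ (where $(G_1\otimes G_2)(X) = G_1(X)\otimes G_2(X)$) is a symmetric distributive law between $T$ and the endofunctor $G_1\otimes G_2$. -/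

import Mathlib

open CategoryTheory MonoidalCategory

/-- Tensoring of symmetric distributive laws: for an oplax monoidal symmetric
monad `(T, ℓ, e, μ, η, ς)` on a monoidal category and symmetric distributive
laws `ψ₁ : T G₁ ⟶ G₁ T`, `ψ₂ : T G₂ ⟶ G₂ T`, the composite
`ψ = (ψ₁ ⊗ₘ ψ₂) ∘ ℓ` is a symmetric distributive law between `T` and the
pointwise tensor `G₁ ⊗ G₂`. -/
theorem tensor_of_symmetric_distributive_laws
    {C : Type*} [Category C] [MonoidalCategory C] (T : C ⥤ C)
    (μ : T ⋙ T ⟶ T) (η : 𝟭 C ⟶ T) (ς : T ⋙ T ⟶ T ⋙ T)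
    (ℓ : ∀ A B : C, T.obj (A ⊗ B) ⟶ T.obj A ⊗ T.obj B)
    (e : T.obj (𝟙_ C) ⟶ 𝟙_ C)
    (hℓnat : ∀ {A B A' B' : C} (f : A ⟶ A') (g : B ⟶ B'),
      T.map (f ⊗ₘ g) ≫ ℓ A' B' = ℓ A B ≫ (T.map f ⊗ₘ T.map g))
    -- oplax monoidal structure is compatible with `μ`, `η`, `ς`
    (hℓμ : ∀ A B : C,
      μ.app (A ⊗ B) ≫ ℓ A B
        = T.map (ℓ A B) ≫ ℓ (T.obj A) (T.obj B) ≫ (μ.app A ⊗ₘ μ.app B))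
    (hℓη : ∀ A B : C, η.app (A ⊗ B) ≫ ℓ A B = η.app A ⊗ₘ η.app B)
    (hℓς : ∀ A B : C,
      ς.app (A ⊗ B) ≫ T.map (ℓ A B) ≫ ℓ (T.obj A) (T.obj B)
        = T.map (ℓ A B) ≫ ℓ (T.obj A) (T.obj B) ≫ (ς.app A ⊗ₘ ς.app B))
    (G₁ G₂ : C ⥤ C)
    (ψ₁ : ∀ X : C, T.obj (G₁.obj X) ⟶ G₁.obj (T.obj X))
    (ψ₂ : ∀ X : C, T.obj (G₂.obj X) ⟶ G₂.obj (T.obj X))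
    (hψ₁nat : ∀ {X Y : C} (f : X ⟶ Y),
      T.map (G₁.map f) ≫ ψ₁ Y = ψ₁ X ≫ G₁.map (T.map f))
    (hψ₂nat : ∀ {X Y : C} (f : X ⟶ Y),
      T.map (G₂.map f) ≫ ψ₂ Y = ψ₂ X ≫ G₂.map (T.map f))
    -- ψ₁, ψ₂ are symmetric distributive laws
    (hψ₁μ : ∀ X : C, μ.app (G₁.obj X) ≫ ψ₁ X
        = T.map (ψ₁ X) ≫ ψ₁ (T.obj X) ≫ G₁.map (μ.app X))
    (hψ₁η : ∀ X : C, η.app (G₁.obj X) ≫ ψ₁ X = G₁.map (η.app X))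
    (hψ₁ς : ∀ X : C,
      T.map (ψ₁ X) ≫ ψ₁ (T.obj X) ≫ G₁.map (ς.app X)
        = ς.app (G₁.obj X) ≫ T.map (ψ₁ X) ≫ ψ₁ (T.obj X))
    (hψ₂μ : ∀ X : C, μ.app (G₂.obj X) ≫ ψ₂ X
        = T.map (ψ₂ X) ≫ ψ₂ (T.obj X) ≫ G₂.map (μ.app X))
    (hψ₂η : ∀ X : C, η.app (G₂.obj X) ≫ ψ₂ X = G₂.map (η.app X))
    (hψ₂ς : ∀ X : C,
      T.map (ψ₂ X) ≫ ψ₂ (T.obj X) ≫ G₂.map (ς.app X)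
        = ς.app (G₂.obj X) ≫ T.map (ψ₂ X) ≫ ψ₂ (T.obj X)) :
    -- the tensored law `ψ X = ℓ ≫ (ψ₁ X ⊗ₘ ψ₂ X)` is a symmetric distributive law
    -- between `T` and `G₁ ⊗ G₂`:
    (∀ {X Y : C} (f : X ⟶ Y),
      T.map (G₁.map f ⊗ₘ G₂.map f) ≫ (ℓ (G₁.obj Y) (G₂.obj Y) ≫ (ψ₁ Y ⊗ₘ ψ₂ Y))
        = (ℓ (G₁.obj X) (G₂.obj X) ≫ (ψ₁ X ⊗ₘ ψ₂ X))
            ≫ (G₁.map (T.map f) ⊗ₘ G₂.map (T.map f))) ∧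
    (∀ X : C,
      μ.app (G₁.obj X ⊗ G₂.obj X) ≫ ℓ (G₁.obj X) (G₂.obj X) ≫ (ψ₁ X ⊗ₘ ψ₂ X)
        = T.map (ℓ (G₁.obj X) (G₂.obj X) ≫ (ψ₁ X ⊗ₘ ψ₂ X))
            ≫ (ℓ (G₁.obj (T.obj X)) (G₂.obj (T.obj X)) ≫ (ψ₁ (T.obj X) ⊗ₘ ψ₂ (T.obj X)))
            ≫ (G₁.map (μ.app X) ⊗ₘ G₂.map (μ.app X))) ∧
    (∀ X : C,
      η.app (G₁.obj X ⊗ G₂.obj X) ≫ ℓ (G₁.obj X) (G₂.obj X) ≫ (ψ₁ X ⊗ₘ ψ₂ X)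
        = G₁.map (η.app X) ⊗ₘ G₂.map (η.app X)) ∧
    (∀ X : C,
      T.map (ℓ (G₁.obj X) (G₂.obj X) ≫ (ψ₁ X ⊗ₘ ψ₂ X))
          ≫ (ℓ (G₁.obj (T.obj X)) (G₂.obj (T.obj X)) ≫ (ψ₁ (T.obj X) ⊗ₘ ψ₂ (T.obj X)))
          ≫ (G₁.map (ς.app X) ⊗ₘ G₂.map (ς.app X))
        = ς.app (G₁.obj X ⊗ G₂.obj X)
            ≫ T.map (ℓ (G₁.obj X) (G₂.obj X) ≫ (ψ₁ X ⊗ₘ ψ₂ X))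
            ≫ (ℓ (G₁.obj (T.obj X)) (G₂.obj (T.obj X)) ≫ (ψ₁ (T.obj X) ⊗ₘ ψ₂ (T.obj X)))) := by
  refine ⟨?_, ?_, ?_, ?_⟩
  · intro X Y f
    rw [← Category.assoc, hℓnat, Category.assoc, tensorHom_comp_tensorHom, hψ₁nat, hψ₂nat, ← tensorHom_comp_tensorHom]
    simp only [Category.assoc]
  · intro X
    rw [← Category.assoc, hℓμ, Functor.map_comp]
    slice_rhs 2 3 => rw [hℓnat]
    simp only [Category.assoc, tensorHom_comp_tensorHom, hψ₁μ, hψ₂μ]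
  · intro X
    rw [← Category.assoc, hℓη, tensorHom_comp_tensorHom, hψ₁η, hψ₂η]
  · intro X
    have key := reassoc_of% (hℓς (G₁.obj X) (G₂.obj X))
    rw [Functor.map_comp]
    slice_lhs 2 3 => rw [hℓnat]
    slice_rhs 3 4 => rw [hℓnat]
    simp only [Category.assoc, tensorHom_comp_tensorHom]
    rw [hψ₁ς, hψ₂ς]
    simp only [← tensorHom_comp_tensorHom, Category.assoc, key]
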